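/- For n ≥ k ≥ 1, the sum of q^{MAJ(σ)} over 1̲32-avoiding permutations σ of [n] with exactly k−1 descents equals S_q(n,k). -/

import Mathlib

open Finset

variable {n : ℕ}

/-- The word (in one-line notation, with letters `1,...,n`) of a permutation of `[n]`. -/
def pw (p : Equiv.Perm (Fin n)) : Fin n → ℕ := fun i => (p i : ℕ) + 1

/-- Descent number of a word: positions `i` with `w_i > w_{i+1}`. -/
def desW (w : Fin n → ℕ) : ℕ :=
  (Finset.univ.filter fun i : Fin n => ∃ j : Fin n, (j : ℕ) = (i : ℕ) + 1 ∧ w j < w i).card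

/-- Major index of a word: the sum of the (1-indexed) descent positions. -/
def majW (w : Fin n → ℕ) : ℕ :=
  ∑ i ∈ Finset.univ.filter
      (fun i : Fin n => ∃ j : Fin n, (j : ℕ) = (i : ℕ) + 1 ∧ w j < w i), ((i : ℕ) + 1)

/-- Occurrences of the vincular pattern 2-31: `i < j` with `w_{j+1} < w_i < w_j`. -/
def pat2_31 (w : Fin n → ℕ) : ℕ :=
  ((Finset.univ ×ˢ Finset.univ).filter fun q : Fin n × Fin n =>
    q.1 < q.2 ∧ ∃ j' : Fin n, (j' : ℕ) = (q.2 : ℕ) + 1 ∧ w j' < w q.1 ∧ w q.1 < w q.2).card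

/-- Occurrences of the vincular pattern 2-13: `i < j` with `w_j < w_i < w_{j+1}`. -/
def pat2_13 (w : Fin n → ℕ) : ℕ :=
  ((Finset.univ ×ˢ Finset.univ).filter fun q : Fin n × Fin n =>
    q.1 < q.2 ∧ ∃ j' : Fin n, (j' : ℕ) = (q.2 : ℕ) + 1 ∧ w q.2 < w q.1 ∧ w q.1 < w j').card

/-- Occurrences of the vincular pattern 1-32: `i < j` with `w_i < w_{j+1} < w_j`. -/
def pat1_32 (w : Fin n → ℕ) : ℕ :=
  ((Finset.univ ×ˢ Finset.univ).filter fun q : Fin n × Fin n =>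
    q.1 < q.2 ∧ ∃ j' : Fin n, (j' : ℕ) = (q.2 : ℕ) + 1 ∧ w q.1 < w j' ∧ w j' < w q.2).card

/-- Occurrences of the vincular pattern 3-21: `i < j` with `w_{j+1} < w_j < w_i`. -/
def pat3_21 (w : Fin n → ℕ) : ℕ :=
  ((Finset.univ ×ˢ Finset.univ).filter fun q : Fin n × Fin n =>
    q.1 < q.2 ∧ ∃ j' : Fin n, (j' : ℕ) = (q.2 : ℕ) + 1 ∧ w j' < w q.2 ∧ w q.2 < w q.1).card

/-- The Babson–Steingrímsson statistic BAST = (21) + (2-13) + (1-32) + (3-21). -/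
def BAST (w : Fin n → ℕ) : ℕ := desW w + pat2_13 w + pat1_32 w + pat3_21 w

/-- `w` avoids the vincular pattern 1-32: there is no `i < j` with `w_i < w_{j+1} < w_j`. -/
def Avoids132 (w : Fin n → ℕ) : Prop :=
  ∀ i j j' : Fin n, i < j → (j' : ℕ) = (j : ℕ) + 1 → ¬(w i < w j' ∧ w j' < w j)

open Polynomial in
/-- The q-integer [k]_q. -/
noncomputable def qint (k : ℕ) : Polynomial ℚ := ∑ i ∈ Finset.range k, X ^ i

open Polynomial in
/-- The q-Stirling number S_q(n,k). -/
noncomputable def Sq : ℕ → ℕ → Polynomial ℚ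
  | 0, 0 => 1
  | 0, _ + 1 => 0
  | _ + 1, 0 => 0
  | n + 1, k + 1 => X ^ k * Sq n k + qint (k + 1) * Sq n (k + 1)

namespace S12
open Polynomial

variable {N : ℕ}

/-- ℕ-coordinate reading of a word. -/
def wd (w : Fin N → ℕ) : ℕ → ℕ := fun x => if h : x < N then w ⟨x, h⟩ else 0

lemma wd_lt (w : Fin N → ℕ) {x : ℕ} (h : x < N) : wd w x = w ⟨x, h⟩ := dif_pos h

lemma wd_ge (w : Fin N → ℕ) {x : ℕ} (h : N ≤ x) : wd w x = 0 := dif_neg (by omega)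

/-- Descent set in ℕ coordinates. -/
def DN (w : Fin N → ℕ) : Finset ℕ :=
  (Finset.range N).filter fun x => x + 1 < N ∧ wd w (x + 1) < wd w x

lemma mem_DN {w : Fin N → ℕ} {x : ℕ} :
    x ∈ DN w ↔ x + 1 < N ∧ wd w (x + 1) < wd w x := by
  simp only [DN, Finset.mem_filter, Finset.mem_range]
  exact ⟨fun h => h.2, fun h => ⟨by omega, h⟩⟩

lemma cond_iff (w : Fin N → ℕ) (i : Fin N) :
    (∃ j : Fin N, (j : ℕ) = (i : ℕ) + 1 ∧ w j < w i) ↔ ((i : ℕ) ∈ DN w) := by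
  rw [mem_DN]
  constructor
  · rintro ⟨j, hj, hlt⟩
    have h1 : (i : ℕ) + 1 < N := hj ▸ j.isLt
    refine ⟨h1, ?_⟩
    rw [wd_lt w h1, wd_lt w i.isLt]
    have : (⟨(i : ℕ) + 1, h1⟩ : Fin N) = j := Fin.ext (by simp [hj])
    rw [this]
    simpa using hlt
  · rintro ⟨h1, hlt⟩
    refine ⟨⟨(i : ℕ) + 1, h1⟩, rfl, ?_⟩
    rw [wd_lt w h1, wd_lt w i.isLt] at hlt
    simpa using hlt

lemma desW_eq (w : Fin N → ℕ) : desW w = (DN w).card := by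
  unfold desW
  rw [Finset.filter_congr (fun i _ => cond_iff w i)]
  refine Finset.card_nbij (i := fun i => (i : ℕ)) ?_ ?_ ?_
  · intro i hi; simpa using (Finset.mem_filter.mp hi).2
  · intro a _ b _ h; exact Fin.ext h
  · intro x hx
    simp only [Finset.coe_filter, Set.mem_setOf_eq, Finset.mem_coe] at hx ⊢
    have hxN : x < N := by have := mem_DN.mp hx; omega
    exact ⟨⟨x, hxN⟩, by simpa using hx, rfl⟩

lemma majW_eq (w : Fin N → ℕ) : majW w = ∑ x ∈ DN w, (x + 1) := by
  unfold majW
  rw [Finset.sum_congr (Finset.filter_congr (fun i _ => cond_iff w i)) (fun _ _ => rfl)]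
  refine Finset.sum_nbij (i := fun i => (i : ℕ)) ?_ ?_ ?_ ?_
  · intro i hi; simpa using (Finset.mem_filter.mp hi).2
  · intro a _ b _ h; exact Fin.ext h
  · intro x hx
    simp only [Finset.coe_filter, Set.mem_setOf_eq, Finset.mem_coe] at hx ⊢
    have hxN : x < N := by have := mem_DN.mp hx; omega
    exact ⟨⟨x, hxN⟩, by simpa using hx, rfl⟩
  · intro i _; rfl

/-- Avoidance in ℕ coordinates. -/
def AvN (N : ℕ) (w : Fin N → ℕ) : Prop :=
  ∀ x y : ℕ, x < y → y + 1 < N → ¬(wd w x < wd w (y + 1) ∧ wd w (y + 1) < wd w y)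

lemma avoids_iff (w : Fin N → ℕ) : Avoids132 w ↔ AvN N w := by
  constructor
  · intro h x y hxy hyN
    have hyN' : y < N := by omega
    have hxN : x < N := by omega
    have := h ⟨x, hxN⟩ ⟨y, hyN'⟩ ⟨y + 1, hyN⟩ (by exact hxy) rfl
    rw [wd_lt w hxN, wd_lt w hyN', wd_lt w hyN]
    exact this
  · intro h i j j' hij hj'
    have := h (i : ℕ) (j : ℕ) (by exact hij) (hj' ▸ j'.isLt)
    rw [wd_lt w i.isLt, wd_lt w j.isLt, wd_lt w (hj' ▸ j'.isLt)] at this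
    have hj'' : (⟨(j : ℕ) + 1, hj' ▸ j'.isLt⟩ : Fin N) = j' := Fin.ext (by simp [hj'])
    rw [hj''] at this
    simpa using this

end S12

namespace S12

variable {m : ℕ}

/-- Insert the maximal letter `m+1` at position `p` in the word of `τ`. -/
def ins (p : Fin (m + 1)) (τ : Equiv.Perm (Fin m)) : Equiv.Perm (Fin (m + 1)) :=
  (finSuccEquiv' p).trans ((Equiv.optionCongr τ).trans (finSuccEquiv' (Fin.last m)).symm)

lemma ins_self (p : Fin (m + 1)) (τ : Equiv.Perm (Fin m)) : ins p τ p = Fin.last m := by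
  simp [ins]

lemma ins_succAbove (p : Fin (m + 1)) (τ : Equiv.Perm (Fin m)) (i : Fin m) :
    ins p τ (p.succAbove i) = (τ i).castSucc := by
  simp [ins, Fin.succAbove_last]

lemma wd_pw_le (τ : Equiv.Perm (Fin m)) (x : ℕ) : wd (pw τ) x ≤ m := by
  unfold wd
  split
  · next h => exact Nat.succ_le_of_lt (τ ⟨x, h⟩).isLt
  · omega

lemma wd_pw_pos (τ : Equiv.Perm (Fin m)) {x : ℕ} (h : x < m) : 1 ≤ wd (pw τ) x := by
  rw [wd_lt _ h]; exact Nat.le_add_left 1 _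

lemma wd_pw_inj (τ : Equiv.Perm (Fin m)) {x y : ℕ} (hx : x < m) (hy : y < m)
    (h : wd (pw τ) x = wd (pw τ) y) : x = y := by
  rw [wd_lt _ hx, wd_lt _ hy] at h
  have : τ ⟨x, hx⟩ = τ ⟨y, hy⟩ := Fin.ext (by simpa [pw] using h)
  have := τ.injective this
  simpa using congrArg Fin.val this

lemma wd_ins (p : Fin (m + 1)) (τ : Equiv.Perm (Fin m)) (x : ℕ) :
    wd (pw (ins p τ)) x =
      if x = (p : ℕ) then m + 1
      else if x < (p : ℕ) then wd (pw τ) x else wd (pw τ) (x - 1) := by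
  by_cases hx : x < m + 1
  · rw [wd_lt _ hx]
    by_cases hxp : x = (p : ℕ)
    · have : (⟨x, hx⟩ : Fin (m + 1)) = p := Fin.ext hxp
      rw [if_pos hxp, this, pw, ins_self]
      simp [Fin.last]
    · rw [if_neg hxp]
      by_cases hlt : x < (p : ℕ)
      · rw [if_pos hlt]
        have hxm : x < m := by
          have := p.isLt; omega
        have : (⟨x, hx⟩ : Fin (m + 1)) = p.succAbove ⟨x, hxm⟩ := by
          rw [Fin.succAbove_of_castSucc_lt]
          · rfl
          · simpa [Fin.lt_def] using hlt
        rw [this, pw, ins_succAbove, wd_lt _ hxm]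
        simp [pw]
      · have hgt : (p : ℕ) < x := by omega
        have hx1 : x - 1 < m := by omega
        have : (⟨x, hx⟩ : Fin (m + 1)) = p.succAbove ⟨x - 1, hx1⟩ := by
          rw [Fin.succAbove_of_le_castSucc]
          · exact Fin.ext (by simp; omega)
          · simp [Fin.le_def]; omega
        rw [this, pw, ins_succAbove, wd_lt _ hx1, if_neg hlt]
        simp [pw]
  · rw [wd_ge _ (by omega)]
    have hp : (p : ℕ) ≤ m := Nat.lt_succ_iff.mp p.isLt
    rw [if_neg (by omega), if_neg (by omega), wd_ge _ (by omega)]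

end S12

namespace S12

variable {m : ℕ}

/-- Expected descent set after inserting the max at position `x`. -/
def DI (m : ℕ) (D : Finset ℕ) (x : ℕ) : Finset ℕ :=
  (D.filter fun f => f + 1 < x) ∪ (if x < m then {x} else ∅) ∪
    ((D.filter fun f => x ≤ f).image (· + 1))

lemma mem_DI {D : Finset ℕ} {x y : ℕ} :
    y ∈ DI m D x ↔ (y ∈ D ∧ y + 1 < x) ∨ (y = x ∧ x < m) ∨ (x < y ∧ 1 ≤ y ∧ y - 1 ∈ D) := by
  unfold DI
  simp only [Finset.mem_union, Finset.mem_filter, Finset.mem_image]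
  constructor
  · rintro ((h | h) | ⟨f, ⟨hf1, hf2⟩, rfl⟩)
    · exact Or.inl h
    · right; left
      rcases Nat.lt_or_ge x m with hx | hx
      · rw [if_pos hx] at h; simp at h; exact ⟨h, hx⟩
      · rw [if_neg (by omega)] at h; simp at h
    · right; right; exact ⟨by omega, by omega, by simpa using hf1⟩
  · rintro (h | ⟨rfl, hx⟩ | ⟨h1, h2, h3⟩)
    · exact Or.inl (Or.inl h)
    · left; right; rw [if_pos hx]; simp
    · right; exact ⟨y - 1, ⟨h3, by omega⟩, by omega⟩

lemma DN_ins (p : Fin (m + 1)) (τ : Equiv.Perm (Fin m)) :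
    DN (pw (ins p τ)) = DI m (DN (pw τ)) (p : ℕ) := by
  have hP : (p : ℕ) ≤ m := Nat.lt_succ_iff.mp p.isLt
  have hule := wd_pw_le τ
  ext y
  rw [mem_DN, mem_DI, wd_ins p τ (y + 1), wd_ins p τ y]
  simp only [mem_DN]
  rcases Nat.lt_trichotomy y (p : ℕ) with hy | hy | hy
  · by_cases h1 : y + 1 = (p : ℕ)
    · rw [if_pos h1, if_neg (by omega), if_pos hy]
      constructor
      · rintro ⟨_, h⟩; exact absurd h (by have := hule y; omega)
      · rintro (⟨⟨h2, _⟩, h3⟩ | ⟨h2, h3⟩ | ⟨h2, _⟩) <;> omega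
    · rw [if_neg h1, if_pos (by omega), if_neg (by omega), if_pos hy]
      constructor
      · rintro ⟨h2, h3⟩; exact Or.inl ⟨⟨by omega, h3⟩, by omega⟩
      · rintro (⟨⟨h2, h3⟩, h4⟩ | ⟨h2, h3⟩ | ⟨h2, _⟩)
        · exact ⟨by omega, h3⟩
        · omega
        · omega
  · rw [if_neg (by omega), if_neg (by omega), if_pos hy, Nat.add_sub_cancel]
    constructor
    · rintro ⟨h2, _⟩; exact Or.inr (Or.inl ⟨hy, by omega⟩)
    · rintro (⟨_, h3⟩ | ⟨_, h2⟩ | ⟨h2, _⟩)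
      · omega
      · exact ⟨by omega, by have := hule y; omega⟩
      · omega
  · rw [if_neg (by omega), if_neg (by omega), if_neg (by omega), if_neg (by omega),
      Nat.add_sub_cancel]
    have hy1 : y - 1 + 1 = y := by omega
    constructor
    · rintro ⟨h2, h3⟩
      refine Or.inr (Or.inr ⟨hy, by omega, ?_⟩)
      rw [hy1]; exact ⟨by omega, h3⟩
    · rintro (⟨_, h3⟩ | ⟨h2, _⟩ | ⟨h2, h3, h4⟩)
      · omega
      · omega
      · rw [hy1] at h4; exact ⟨by omega, h4.2⟩

lemma DN_lt {N : ℕ} (w : Fin N → ℕ) : ∀ f ∈ DN w, f + 1 < N := fun f hf => (mem_DN.mp hf).1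

lemma DI_top {D : Finset ℕ} (hD : ∀ f ∈ D, f + 1 < m) : DI m D m = D := by
  unfold DI
  rw [if_neg (lt_irrefl m)]
  rw [Finset.filter_true_of_mem hD, Finset.filter_false_of_mem (fun f hf => by
    have := hD f hf; omega)]
  simp

lemma DI_zero (hm : 1 ≤ m) (D : Finset ℕ) :
    DI m D 0 = insert 0 (D.image (· + 1)) := by
  unfold DI
  rw [if_pos (show (0:ℕ) < m from hm), Finset.filter_false_of_mem (fun f _ => by omega),
    Finset.filter_true_of_mem (fun f _ => Nat.zero_le f)]
  ext y
  simp [Finset.mem_insert, or_comm]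

lemma card_DI_zero (hm : 1 ≤ m) (D : Finset ℕ) : (DI m D 0).card = D.card + 1 := by
  rw [DI_zero hm D, Finset.card_insert_of_notMem (by simp),
    Finset.card_image_of_injective _ (add_left_injective 1)]

lemma sum_DI_zero (hm : 1 ≤ m) (D : Finset ℕ) :
    ∑ y ∈ DI m D 0, (y + 1) = (∑ f ∈ D, (f + 1)) + D.card + 1 := by
  rw [DI_zero hm D, Finset.sum_insert (by simp),
    Finset.sum_image (fun a _ b _ h => by omega)]
  rw [show ∀ S : Finset ℕ, ∑ f ∈ S, (f + 1 + 1) = (∑ f ∈ S, (f + 1)) + S.card from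
    fun S => by rw [Finset.sum_add_distrib, Finset.sum_const, smul_eq_mul, mul_one]]
  omega

lemma filter_ge_eq {D : Finset ℕ} {e : ℕ} (he : e ∈ D) :
    D.filter (fun f => e ≤ f) = insert e (D.filter (fun f => e < f)) := by
  ext y
  simp only [Finset.mem_filter, Finset.mem_insert]
  constructor
  · rintro ⟨h1, h2⟩
    rcases Nat.eq_or_lt_of_le h2 with h | h
    · exact Or.inl h.symm
    · exact Or.inr ⟨h1, h⟩
  · rintro (rfl | ⟨h1, h2⟩)
    · exact ⟨he, le_refl _⟩
    · exact ⟨h1, le_of_lt h2⟩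

lemma DI_mid {D : Finset ℕ} {e : ℕ} (he : e ∈ D) (hD : ∀ f ∈ D, f + 1 < m) :
    DI m D (e + 1) =
      (D.filter fun f => f < e) ∪ {e + 1} ∪ ((D.filter fun f => e < f).image (· + 1)) := by
  unfold DI
  have h1 : D.filter (fun f => f + 1 < e + 1) = D.filter (fun f => f < e) :=
    Finset.filter_congr (fun f _ => by simp)
  have h2 : D.filter (fun f => e + 1 ≤ f) = D.filter (fun f => e < f) :=
    Finset.filter_congr (fun f _ => Iff.rfl)
  rw [if_pos (hD e he), h1, h2]

lemma disj_mid {D : Finset ℕ} {e : ℕ} :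
    Disjoint ((D.filter fun f => f < e) ∪ {e + 1})
      ((D.filter fun f => e < f).image (· + 1)) ∧
    Disjoint (D.filter fun f => f < e) ({e + 1} : Finset ℕ) := by
  constructor
  · rw [Finset.disjoint_left]
    intro y hy
    simp only [Finset.mem_union, Finset.mem_filter, Finset.mem_singleton] at hy
    simp only [Finset.mem_image, Finset.mem_filter, not_exists]
    rintro f ⟨⟨_, hf⟩, rfl⟩
    omega
  · rw [Finset.disjoint_left]
    intro y hy
    simp only [Finset.mem_filter] at hy
    simp only [Finset.mem_singleton]
    omega

lemma card_DI_mid {D : Finset ℕ} {e : ℕ} (he : e ∈ D) (hD : ∀ f ∈ D, f + 1 < m) :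
    (DI m D (e + 1)).card = D.card := by
  rw [DI_mid he hD, Finset.card_union_of_disjoint disj_mid.1,
    Finset.card_union_of_disjoint disj_mid.2,
    Finset.card_image_of_injective _ (add_left_injective 1), Finset.card_singleton]
  have h1 := Finset.card_filter_add_card_filter_not (s := D) (fun f => f < e)
  have h2 : D.filter (fun f => ¬ f < e) = D.filter (fun f => e ≤ f) := by
    apply Finset.filter_congr; intro f _; exact not_lt
  rw [h2, filter_ge_eq he, Finset.card_insert_of_notMem (by simp)] at h1
  omega

lemma sum_DI_mid {D : Finset ℕ} {e : ℕ} (he : e ∈ D) (hD : ∀ f ∈ D, f + 1 < m) :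
    ∑ y ∈ DI m D (e + 1), (y + 1) =
      (∑ f ∈ D, (f + 1)) + 1 + (D.filter fun f => e < f).card := by
  rw [DI_mid he hD, Finset.sum_union disj_mid.1, Finset.sum_union disj_mid.2,
    Finset.sum_image (fun a _ b _ h => by omega), Finset.sum_singleton]
  have h1 := Finset.sum_filter_add_sum_filter_not D (fun f => f < e) (fun f => f + 1)
  have h2 : D.filter (fun f => ¬ f < e) = D.filter (fun f => e ≤ f) := by
    apply Finset.filter_congr; intro f _; exact not_lt
  rw [h2, filter_ge_eq he, Finset.sum_insert (by simp)] at h1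
  have h3 : ∀ S : Finset ℕ, ∑ f ∈ S, (f + 1 + 1) = (∑ f ∈ S, (f + 1)) + S.card :=
    fun S => by rw [Finset.sum_add_distrib, Finset.sum_const, smul_eq_mul, mul_one]
  rw [h3]
  omega

end S12

namespace S12

variable {m : ℕ}

lemma U_le (σ : Equiv.Perm (Fin (m + 1))) (x : ℕ) : wd (pw σ) x ≤ m + 1 := wd_pw_le σ x

lemma U_s (p : Fin (m + 1)) (τ : Equiv.Perm (Fin m)) (x : ℕ) :
    wd (pw (ins p τ)) (if x < (p : ℕ) then x else x + 1) = wd (pw τ) x := by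
  by_cases h : x < (p : ℕ)
  · rw [if_pos h, wd_ins, if_neg (by omega), if_pos h]
  · rw [if_neg h, wd_ins, if_neg (by omega), if_neg (by omega), Nat.add_sub_cancel]

lemma avn_ins_iff (p : Fin (m + 1)) (τ : Equiv.Perm (Fin m)) :
    AvN (m + 1) (pw (ins p τ)) ↔
      AvN m (pw τ) ∧
        ((p : ℕ) = m ∨ ∀ y < (p : ℕ), wd (pw τ) (p : ℕ) < wd (pw τ) y) := by
  have hP : (p : ℕ) ≤ m := Nat.lt_succ_iff.mp p.isLt
  have hule := wd_pw_le τ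
  constructor
  · intro h
    constructor
    · intro x y hxy hym ⟨h1, h2⟩
      rcases Nat.lt_trichotomy (y + 1) (p : ℕ) with hc | hc | hc
      · refine h x y hxy (by omega) ⟨?_, ?_⟩
        · rw [wd_ins, if_neg (by omega), if_pos (by omega),
            wd_ins, if_neg (by omega), if_pos (by omega)]
          exact h1
        · rw [wd_ins, if_neg (by omega), if_pos (by omega),
            wd_ins, if_neg (by omega), if_pos (by omega)]
          exact h2
      · refine h x (y + 1) (by omega) (by omega) ⟨?_, ?_⟩
        · rw [wd_ins p τ x, if_neg (by omega), if_pos (by omega),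
            wd_ins p τ (y + 1 + 1), if_neg (by omega), if_neg (by omega), Nat.add_sub_cancel]
          exact h1
        · rw [wd_ins p τ (y + 1 + 1), if_neg (by omega), if_neg (by omega), Nat.add_sub_cancel,
            wd_ins p τ (y + 1), if_pos hc]
          have := hule (y + 1)
          omega
      · refine h (if x < (p : ℕ) then x else x + 1) (y + 1)
          (by split_ifs <;> omega) (by omega) ⟨?_, ?_⟩
        · rw [U_s p τ x, wd_ins p τ (y + 1 + 1), if_neg (by omega), if_neg (by omega),
            Nat.add_sub_cancel]
          exact h1
        · rw [wd_ins p τ (y + 1 + 1), if_neg (by omega), if_neg (by omega), Nat.add_sub_cancel,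
            wd_ins p τ (y + 1), if_neg (by omega), if_neg (by omega), Nat.add_sub_cancel]
          exact h2
    · by_cases hPm : (p : ℕ) = m
      · exact Or.inl hPm
      · right
        intro y hy
        have hP' : (p : ℕ) < m := by omega
        have := h y (p : ℕ) hy (by omega)
        rw [wd_ins, if_neg (by omega), if_pos hy, wd_ins, if_neg (by omega),
          if_neg (by omega), Nat.add_sub_cancel, wd_ins, if_pos rfl] at this
        have hne : wd (pw τ) y ≠ wd (pw τ) (p : ℕ) := fun hEq =>
          (by omega : y ≠ (p : ℕ)) (wd_pw_inj τ (by omega) hP' hEq)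
        have := hule (p : ℕ)
        omega
  · rintro ⟨hτ, hgood⟩ x y hxy hym ⟨h1, h2⟩
    have hUx := U_le (ins p τ) x
    have hUy := U_le (ins p τ) y
    have hUy1 := U_le (ins p τ) (y + 1)
    have hy1P : y + 1 ≠ (p : ℕ) := by
      intro hEq
      rw [wd_ins, if_pos hEq] at h2
      rw [wd_ins, if_neg (by omega), if_pos (by omega)] at h2
      have := hule y
      omega
    have hxP : x ≠ (p : ℕ) := by
      intro hEq
      rw [wd_ins, if_pos hEq] at h1
      rw [wd_ins, if_neg hy1P] at h1
      split at h1
      · have := hule (y + 1); omega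
      · have := hule (y + 1 - 1); omega
    by_cases hyP : y = (p : ℕ)
    · have hPm : (p : ℕ) < m := by omega
      rcases hgood with hg | hg
      · omega
      · rw [wd_ins p τ x, if_neg hxP, if_pos (by omega)] at h1
        rw [wd_ins p τ (y + 1), if_neg hy1P, if_neg (by omega), Nat.add_sub_cancel] at h1
        have := hg x (by omega)
        rw [hyP] at h1
        omega
    · rcases Nat.lt_trichotomy (y + 1) (p : ℕ) with hc | hc | hc
      · refine hτ x y hxy (by omega) ⟨?_, ?_⟩
        · rw [wd_ins, if_neg (by omega), if_pos (by omega),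
            wd_ins, if_neg (by omega), if_pos (by omega)] at h1
          exact h1
        · rw [wd_ins, if_neg (by omega), if_pos (by omega),
            wd_ins, if_neg (by omega), if_pos (by omega)] at h2
          exact h2
      · exact absurd hc hy1P
      · have hyP' : (p : ℕ) < y := by omega
        refine hτ (if x < (p : ℕ) then x else x - 1) (y - 1)
          (by split_ifs <;> omega) (by omega) ⟨?_, ?_⟩
        · rw [show y - 1 + 1 = y from by omega]
          rw [wd_ins p τ (y + 1), if_neg hy1P, if_neg (by omega), Nat.add_sub_cancel] at h1
          rw [wd_ins p τ x, if_neg hxP] at h1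
          by_cases hlt : x < (p : ℕ)
          · rw [if_pos hlt] at h1 ⊢; exact h1
          · rw [if_neg hlt] at h1 ⊢; exact h1
        · rw [show y - 1 + 1 = y from by omega]
          rw [wd_ins p τ (y + 1), if_neg hy1P, if_neg (by omega), Nat.add_sub_cancel,
            wd_ins p τ y, if_neg hyP, if_neg (by omega)] at h2
          exact h2

lemma good_iff (τ : Equiv.Perm (Fin m)) (hτ : AvN m (pw τ)) (p : Fin (m + 1)) :
    AvN (m + 1) (pw (ins p τ)) ↔
      ((p : ℕ) = m ∨ (p : ℕ) = 0 ∨ (p : ℕ) - 1 ∈ DN (pw τ)) := by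
  rw [avn_ins_iff, and_iff_right hτ]
  have hP : (p : ℕ) ≤ m := Nat.lt_succ_iff.mp p.isLt
  constructor
  · rintro (h | h)
    · exact Or.inl h
    · by_cases h0 : (p : ℕ) = 0
      · exact Or.inr (Or.inl h0)
      · by_cases hm : (p : ℕ) = m
        · exact Or.inl hm
        · refine Or.inr (Or.inr ?_)
          rw [mem_DN, show (p : ℕ) - 1 + 1 = (p : ℕ) from by omega]
          exact ⟨by omega, h ((p : ℕ) - 1) (by omega)⟩
  · rintro (h | h | h)
    · exact Or.inl h
    · right; intro y hy; omega
    · right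
      intro y hy
      rw [mem_DN, show (p : ℕ) - 1 + 1 = (p : ℕ) from by omega] at h
      obtain ⟨hm', hlt⟩ := h
      rcases Nat.lt_or_ge y ((p : ℕ) - 1) with hy' | hy'
      · by_contra hcon
        have hne : wd (pw τ) y ≠ wd (pw τ) (p : ℕ) := fun hEq =>
          (by omega : y ≠ (p : ℕ)) (wd_pw_inj τ (by omega) (by omega) hEq)
        have hpat := hτ y ((p : ℕ) - 1) hy' (by omega)
        rw [show (p : ℕ) - 1 + 1 = (p : ℕ) from by omega] at hpat
        exact hpat ⟨by omega, hlt⟩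
      · have : y = (p : ℕ) - 1 := by omega
        rwa [this]

end S12

namespace S12
open Polynomial

lemma rank_sum (D : Finset ℕ) :
    ∑ e ∈ D, (X : Polynomial ℚ) ^ (1 + (D.filter fun f => e < f).card) =
      ∑ i ∈ Finset.range D.card, (X : Polynomial ℚ) ^ (i + 1) := by
  induction D using Finset.induction_on_min with
  | empty => simp
  | insert a s hmin ih =>
    have ha : a ∉ s := fun h => lt_irrefl a (hmin a h)
    rw [Finset.sum_insert ha, Finset.card_insert_of_notMem ha, Finset.sum_range_succ]
    have h1 : (insert a s).filter (fun f => a < f) = s := by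
      ext x
      simp only [Finset.mem_filter, Finset.mem_insert]
      constructor
      · rintro ⟨hax | hx, h2⟩
        · exfalso; subst hax; omega
        · exact hx
      · intro hx; exact ⟨Or.inr hx, hmin x hx⟩
    have h2 : ∀ e ∈ s, (insert a s).filter (fun f => e < f) = s.filter (fun f => e < f) := by
      intro e he
      ext x
      simp only [Finset.mem_filter, Finset.mem_insert]
      constructor
      · rintro ⟨hax | hx, h2⟩
        · exfalso; subst hax; have := hmin e he; omega
        · exact ⟨hx, h2⟩
      · rintro ⟨hx, h2⟩; exact ⟨Or.inr hx, h2⟩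
    rw [h1, Finset.sum_congr rfl (fun e he => by rw [h2 e he]), ih]
    ring

lemma ins_bijective (m : ℕ) :
    Function.Bijective (fun q : Fin (m + 1) × Equiv.Perm (Fin m) => ins q.1 q.2) := by
  rw [Fintype.bijective_iff_injective_and_card]
  constructor
  · rintro ⟨p, τ⟩ ⟨p', τ'⟩ h
    dsimp only at h
    have hp : p = p' := by
      by_contra hne
      obtain ⟨i, hi⟩ := Fin.exists_succAbove_eq (show p ≠ p' from hne)
      have h1 : ins p τ p = Fin.last m := ins_self p τ
      rw [h] at h1
      rw [← hi, ins_succAbove] at h1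
      exact absurd h1 (Fin.castSucc_lt_last (τ' i)).ne
    subst hp
    have hτ : τ = τ' := by
      apply Equiv.ext
      intro i
      have h2 : ins p τ (p.succAbove i) = ins p τ' (p.succAbove i) := by rw [h]
      rw [ins_succAbove, ins_succAbove] at h2
      exact Fin.castSucc_injective m h2
    rw [hτ]
  · rw [Fintype.card_prod, Fintype.card_perm, Fintype.card_perm, Fintype.card_fin,
      Fintype.card_fin, Nat.factorial_succ]

end S12

namespace S12
open Polynomial

/-- The contribution of inserting the max at position `x`, as a function of the
descent set `D` of the smaller permutation. -/
noncomputable def Hf (m d : ℕ) (D : Finset ℕ) : ℕ → Polynomial ℚ := fun x =>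
  if ((x = m ∨ x = 0 ∨ x - 1 ∈ D) ∧ (DI m D x).card = d)
    then (X : Polynomial ℚ) ^ (∑ y ∈ DI m D x, (y + 1)) else 0

variable {m d : ℕ} {D : Finset ℕ}

lemma Hf_top (hD : ∀ f ∈ D, f + 1 < m) :
    Hf m d D m = if D.card = d then (X : Polynomial ℚ) ^ (∑ f ∈ D, (f + 1)) else 0 := by
  unfold Hf
  rw [DI_top hD]
  by_cases hcard : D.card = d
  · rw [if_pos ⟨Or.inl rfl, hcard⟩, if_pos hcard]
  · rw [if_neg (fun h => hcard h.2), if_neg hcard]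

lemma Hf_zero (hm : 1 ≤ m) :
    Hf m d D 0 =
      if D.card + 1 = d then (X : Polynomial ℚ) ^ ((∑ f ∈ D, (f + 1)) + D.card + 1)
      else 0 := by
  unfold Hf
  rw [card_DI_zero hm D, sum_DI_zero hm D]
  by_cases hcard : D.card + 1 = d
  · rw [if_pos ⟨Or.inr (Or.inl rfl), hcard⟩, if_pos hcard]
  · rw [if_neg (fun h => hcard h.2), if_neg hcard]

lemma Hf_mid {e : ℕ} (he : e ∈ D) (hD : ∀ f ∈ D, f + 1 < m) :
    Hf m d D (e + 1) =
      if D.card = d then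
        (X : Polynomial ℚ) ^ ((∑ f ∈ D, (f + 1)) + 1 + (D.filter fun f => e < f).card)
      else 0 := by
  unfold Hf
  rw [card_DI_mid he hD, sum_DI_mid he hD]
  by_cases hcard : D.card = d
  · rw [if_pos ⟨Or.inr (Or.inr (by simpa using he)), hcard⟩, if_pos hcard]
  · rw [if_neg (fun h => hcard h.2), if_neg hcard]

lemma Hsum (hm : 1 ≤ m) (hD : ∀ f ∈ D, f + 1 < m) :
    ∑ x ∈ Finset.range (m + 1), Hf m d D x =
      (if D.card = d then (X : Polynomial ℚ) ^ (∑ f ∈ D, (f + 1)) * qint (d + 1) else 0) +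
        (if D.card + 1 = d then (X : Polynomial ℚ) ^ ((∑ f ∈ D, (f + 1)) + d) else 0) := by
  have hsub : insert 0 (insert m (D.image (· + 1))) ⊆ Finset.range (m + 1) := by
    intro x hx
    simp only [Finset.mem_insert, Finset.mem_image] at hx
    rcases hx with rfl | rfl | ⟨e, he, rfl⟩
    · simp
    · simp
    · have := hD e he
      simp only [Finset.mem_range]
      omega
  have hout : ∀ x ∈ Finset.range (m + 1), x ∉ insert 0 (insert m (D.image (· + 1))) →
      Hf m d D x = 0 := by
    intro x _ hx
    simp only [Finset.mem_insert, Finset.mem_image, not_or, not_exists] at hx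
    obtain ⟨h0, hm', himg⟩ := hx
    unfold Hf
    rw [if_neg]
    rintro ⟨hg, -⟩
    rcases hg with h | h | h
    · exact hm' h
    · exact h0 h
    · exact (himg (x - 1)) ⟨h, by omega⟩
  rw [← Finset.sum_subset hsub hout]
  have h0 : (0 : ℕ) ∉ insert m (D.image (· + 1)) := by
    simp only [Finset.mem_insert, Finset.mem_image, not_or, not_exists]
    refine ⟨by omega, fun e => ?_⟩
    rintro ⟨-, h⟩
    omega
  have hmm : m ∉ D.image (· + 1) := by
    simp only [Finset.mem_image, not_exists]
    rintro e ⟨he, hEq⟩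
    have := hD e he
    omega
  rw [Finset.sum_insert h0, Finset.sum_insert hmm,
    Finset.sum_image (fun a _ b _ h => by omega : ∀ a ∈ D, ∀ b ∈ D, a + 1 = b + 1 → a = b),
    Hf_zero hm, Hf_top hD, Finset.sum_congr rfl (fun e he => Hf_mid he hD)]
  by_cases hcard : D.card = d
  · rw [if_pos hcard, if_pos hcard,
      if_neg (show ¬(D.card + 1 = d) by omega), if_neg (show ¬(D.card + 1 = d) by omega),
      Finset.sum_congr rfl (fun e (he : e ∈ D) => if_pos hcard)]
    have hpow : ∀ e ∈ D,
        (X : Polynomial ℚ) ^ ((∑ f ∈ D, (f + 1)) + 1 + (D.filter fun f => e < f).card)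
          = (X : Polynomial ℚ) ^ (∑ f ∈ D, (f + 1)) *
              (X : Polynomial ℚ) ^ (1 + (D.filter fun f => e < f).card) := by
      intro e _
      rw [← pow_add]
      congr 1
      omega
    rw [Finset.sum_congr rfl hpow, ← Finset.mul_sum, rank_sum, ← hcard]
    unfold qint
    rw [Finset.sum_range_succ']
    simp only [pow_zero]
    ring
  · rw [if_neg hcard, if_neg hcard,
      Finset.sum_congr rfl (fun e (he : e ∈ D) => if_neg hcard), Finset.sum_const,
      smul_zero]
    simp only [add_zero, zero_add]
    by_cases h2 : D.card + 1 = d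
    · rw [if_pos h2, if_pos h2]
      congr 1
      omega
    · rw [if_neg h2, if_neg h2]

open scoped Classical in
lemma inner_sum (hm : 1 ≤ m) (τ : Equiv.Perm (Fin m)) :
    ∑ p : Fin (m + 1), (if Avoids132 (pw (ins p τ)) ∧ desW (pw (ins p τ)) = d
        then (X : Polynomial ℚ) ^ majW (pw (ins p τ)) else 0) =
      (if Avoids132 (pw τ) ∧ desW (pw τ) = d
        then (X : Polynomial ℚ) ^ majW (pw τ) * qint (d + 1) else 0) +
      (if Avoids132 (pw τ) ∧ desW (pw τ) + 1 = d
        then (X : Polynomial ℚ) ^ (majW (pw τ) + d) else 0) := by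
  by_cases hτ : Avoids132 (pw τ)
  case neg =>
    rw [if_neg (fun h => hτ h.1), if_neg (fun h => hτ h.1), add_zero]
    apply Finset.sum_eq_zero
    intro p _
    rw [if_neg]
    rintro ⟨hav, -⟩
    exact hτ ((avoids_iff _).mpr ((avn_ins_iff p τ).mp ((avoids_iff _).mp hav)).1)
  case pos =>
    have hAvN : AvN m (pw τ) := (avoids_iff _).mp hτ
    have hD : ∀ f ∈ DN (pw τ), f + 1 < m := DN_lt (pw τ)
    have key : ∀ p : Fin (m + 1),
        (if Avoids132 (pw (ins p τ)) ∧ desW (pw (ins p τ)) = d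
          then (X : Polynomial ℚ) ^ majW (pw (ins p τ)) else 0) =
          Hf m d (DN (pw τ)) (p : ℕ) := by
      intro p
      have hc : (Avoids132 (pw (ins p τ)) ∧ desW (pw (ins p τ)) = d) ↔
          ((((p : ℕ)) = m ∨ ((p : ℕ)) = 0 ∨ ((p : ℕ)) - 1 ∈ DN (pw τ)) ∧
            (DI m (DN (pw τ)) ((p : ℕ))).card = d) := by
        rw [desW_eq, DN_ins]
        exact and_congr_left fun _ => (avoids_iff _).trans (good_iff τ hAvN p)
      unfold Hf
      rw [majW_eq, DN_ins]
      exact if_congr hc rfl rfl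
    rw [Finset.sum_congr rfl (fun p _ => key p),
      Fin.sum_univ_eq_sum_range (Hf m d (DN (pw τ))) (m + 1), Hsum hm hD,
      desW_eq, majW_eq]
    congr 1
    · exact (if_congr (and_iff_right hτ) rfl rfl).symm
    · exact (if_congr (and_iff_right hτ) rfl rfl).symm

end S12

namespace S12
open Polynomial

open scoped Classical in
noncomputable def A (n d : ℕ) : Polynomial ℚ :=
  ∑ p ∈ (Finset.univ : Finset (Equiv.Perm (Fin n))).filter
      (fun p => Avoids132 (pw p) ∧ desW (pw p) = d),
    (Polynomial.X : Polynomial ℚ) ^ majW (pw p)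

open scoped Classical in
lemma A_rec (m d : ℕ) (hm : 1 ≤ m) :
    A (m + 1) d = (if d = 0 then 0 else X ^ d * A m (d - 1)) + qint (d + 1) * A m d := by
  have hstep : (∑ σ ∈ (Finset.univ : Finset (Equiv.Perm (Fin (m + 1)))),
      (if Avoids132 (pw σ) ∧ desW (pw σ) = d then (X : Polynomial ℚ) ^ majW (pw σ) else 0)) =
      ∑ q : Fin (m + 1) × Equiv.Perm (Fin m),
        (if Avoids132 (pw (ins q.1 q.2)) ∧ desW (pw (ins q.1 q.2)) = d
          then (X : Polynomial ℚ) ^ majW (pw (ins q.1 q.2)) else 0) :=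
    (Fintype.sum_bijective _ (ins_bijective m) _ _ (fun q => rfl)).symm
  have hτsum : ∀ τ : Equiv.Perm (Fin m),
      (∑ p : Fin (m + 1),
        (if Avoids132 (pw (ins (p, τ).1 (p, τ).2)) ∧ desW (pw (ins (p, τ).1 (p, τ).2)) = d
          then (X : Polynomial ℚ) ^ majW (pw (ins (p, τ).1 (p, τ).2)) else 0)) =
      (if Avoids132 (pw τ) ∧ desW (pw τ) = d
        then (X : Polynomial ℚ) ^ majW (pw τ) * qint (d + 1) else 0) +
      (if Avoids132 (pw τ) ∧ desW (pw τ) + 1 = d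
        then (X : Polynomial ℚ) ^ (majW (pw τ) + d) else 0) := fun τ => inner_sum hm τ
  have h1 : qint (d + 1) * A m d = ∑ τ : Equiv.Perm (Fin m),
      (if Avoids132 (pw τ) ∧ desW (pw τ) = d
        then (X : Polynomial ℚ) ^ majW (pw τ) * qint (d + 1) else 0) := by
    unfold A
    rw [Finset.mul_sum, Finset.sum_filter]
    refine Finset.sum_congr rfl fun τ _ => ?_
    split_ifs with h
    · ring
    · rfl
  have h2 : (if d = 0 then 0 else X ^ d * A m (d - 1)) = ∑ τ : Equiv.Perm (Fin m),
      (if Avoids132 (pw τ) ∧ desW (pw τ) + 1 = d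
        then (X : Polynomial ℚ) ^ (majW (pw τ) + d) else 0) := by
    by_cases hd : d = 0
    · rw [if_pos hd]
      symm
      apply Finset.sum_eq_zero
      intro τ _
      rw [if_neg]
      rintro ⟨-, h⟩
      omega
    · rw [if_neg hd]
      unfold A
      rw [Finset.mul_sum, Finset.sum_filter]
      refine Finset.sum_congr rfl fun τ _ => ?_
      have hiff : (Avoids132 (pw τ) ∧ desW (pw τ) = d - 1) ↔
          (Avoids132 (pw τ) ∧ desW (pw τ) + 1 = d) := by
        constructor <;> rintro ⟨ha, hb⟩ <;> exact ⟨ha, by omega⟩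
      rw [if_congr hiff rfl rfl]
      split_ifs with h
      · rw [pow_add]; ring
      · rfl
  rw [h1, h2]
  conv_lhs => unfold A
  rw [Finset.sum_filter, hstep, Fintype.sum_prod_type_right]
  refine (Finset.sum_congr rfl fun τ _ => hτsum τ).trans ?_
  rw [Finset.sum_add_distrib]
  exact add_comm _ _

lemma Sq_gt : ∀ n k : ℕ, n < k → Sq n k = 0 := by
  intro n
  induction n with
  | zero =>
    intro k hk
    match k, hk with
    | k + 1, _ => rfl
  | succ n ih =>
    intro k hk
    match k, hk with
    | k + 1, hk =>
      show X ^ k * Sq n k + qint (k + 1) * Sq n (k + 1) = 0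
      rw [ih k (by omega), ih (k + 1) (by omega), mul_zero, mul_zero, add_zero]

lemma Sq_zero_right (n : ℕ) (h : 1 ≤ n) : Sq n 0 = 0 := by
  match n, h with
  | n + 1, _ => rfl

open scoped Classical in
lemma A_one (d : ℕ) : A 1 d = if d = 0 then 1 else 0 := by
  have hDN : ∀ τ : Equiv.Perm (Fin 1), DN (pw τ) = ∅ := by
    intro τ
    rw [Finset.eq_empty_iff_forall_notMem]
    intro x hx
    have := (mem_DN.mp hx).1
    omega
  have havo : ∀ τ : Equiv.Perm (Fin 1), Avoids132 (pw τ) := by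
    intro τ i j j' hij hj'
    have h1 : (i : ℕ) < (j : ℕ) := hij
    have := i.isLt
    have := j.isLt
    omega
  unfold A
  by_cases hd : d = 0
  · rw [if_pos hd]
    rw [Finset.filter_true_of_mem (fun τ _ => ⟨havo τ, by rw [desW_eq, hDN, hd]; rfl⟩)]
    have hmaj : ∀ τ : Equiv.Perm (Fin 1), majW (pw τ) = 0 := by
      intro τ; rw [majW_eq, hDN, Finset.sum_empty]
    rw [Finset.sum_congr rfl (fun τ _ => by rw [hmaj τ, pow_zero])]
    rw [Finset.sum_const, Finset.card_univ, Fintype.card_perm, Fintype.card_fin]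
    simp
  · rw [if_neg hd]
    rw [Finset.filter_false_of_mem, Finset.sum_empty]
    rintro τ _ ⟨-, hdes⟩
    rw [desW_eq, hDN] at hdes
    simp at hdes
    omega

open scoped Classical in
lemma A_high (n d : ℕ) (hn : 1 ≤ n) (hd : n ≤ d) : A n d = 0 := by
  unfold A
  rw [Finset.filter_false_of_mem, Finset.sum_empty]
  rintro τ _ ⟨-, hdes⟩
  have hsub : DN (pw τ) ⊆ Finset.range (n - 1) := by
    intro x hx
    have := (mem_DN.mp hx).1
    simp only [Finset.mem_range]
    omega
  have := Finset.card_le_card hsub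
  rw [Finset.card_range] at this
  rw [desW_eq] at hdes
  omega

open scoped Classical in
lemma A_eq_Sq : ∀ n, 1 ≤ n → ∀ d, A n d = Sq n (d + 1) := by
  intro n
  induction n with
  | zero => omega
  | succ n ih =>
    intro _ d
    by_cases hn : 1 ≤ n
    · have hrec := A_rec n d hn
      have hSq : Sq (n + 1) (d + 1) = X ^ d * Sq n d + qint (d + 1) * Sq n (d + 1) := rfl
      rw [hrec, hSq, ih hn d]
      by_cases hd : d = 0
      · subst hd
        rw [if_pos rfl, Sq_zero_right n hn, mul_zero, zero_add, zero_add]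
      · rw [if_neg hd]
        have : d - 1 + 1 = d := by omega
        rw [ih hn (d - 1), this]
    · have hn0 : n = 0 := by omega
      subst hn0
      rw [A_one d]
      by_cases hd : d = 0
      · subst hd
        rw [if_pos rfl]
        show (1 : Polynomial ℚ) = X ^ 0 * Sq 0 0 + qint 1 * Sq 0 1
        rw [Sq_gt 0 1 (by omega)]
        show (1 : Polynomial ℚ) = X ^ 0 * 1 + qint 1 * 0
        simp
      · rw [if_neg hd, Sq_gt 1 (d + 1) (by omega)]

end S12

open scoped Classical in
/-- The sum of q^{MAJ(σ)} over 1-32-avoiding permutations of [n] with k−1 descents is S_q(n,k). -/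
theorem stmt12 (n k : ℕ) (hk : 1 ≤ k) (hn : k ≤ n) :
    ∑ p ∈ (Finset.univ : Finset (Equiv.Perm (Fin n))).filter
        (fun p => Avoids132 (pw p) ∧ desW (pw p) = k - 1),
      (Polynomial.X : Polynomial ℚ) ^ majW (pw p) = Sq n k := by
  have h := S12.A_eq_Sq n (by omega) (k - 1)
  rw [show k - 1 + 1 = k from by omega] at h
  exact h
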